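/- In G = ⟨r, s | r³ = s² = 1⟩ with normal free subgroup F = ⟨srsr², sr²sr⟩ of rank 2, conjugation by sr induces an automorphism of the abelianization F^ab ≅ ℤ², and the induced action on the set of lines through the origin in ℚ² has all orbits of size exactly 3 (for lines arising from nontrivial elements). -/

import Mathlib

/-- The relators `r³` and `s²` (with `r = FreeGroup.of true`, `s = FreeGroup.of false`). -/
def modRels : Set (FreeGroup Bool) :=
  {(FreeGroup.of true) ^ 3, (FreeGroup.of false) ^ 2}

/-- The group `G = ⟨r, s ∣ r³ = s² = 1⟩ ≅ ℤ/2 * ℤ/3`. -/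
abbrev ModGroup : Type := PresentedGroup modRels

/-- `r`. -/
def rr : ModGroup := PresentedGroup.of true
/-- `s`. -/
def ss : ModGroup := PresentedGroup.of false

/-- The subgroup `F = ⟨ s r s r², s r² s r ⟩`. -/
def modF : Subgroup ModGroup :=
  Subgroup.closure {ss * rr * ss * rr ^ 2, ss * rr ^ 2 * ss * rr}

/-- The endomorphism of the abelianization `F^ab` induced by conjugation by `s r`. -/
noncomputable def conjAb (hN : modF.Normal) :
    Abelianization modF →* Abelianization modF :=
  Abelianization.map (@MulAut.conjNormal ModGroup _ modF hN (ss * rr)).toMonoidHom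

/-- Two elements of an abelian group span the same line (over ℚ) if they have equal
nonzero powers. -/
def SameLine {A : Type} [CommGroup A] (x y : A) : Prop :=
  ∃ m n : ℤ, m ≠ 0 ∧ n ≠ 0 ∧ x ^ m = y ^ n

namespace CP
open Matrix

lemma hr3 : rr ^ 3 = 1 := by
  have : rr ^ 3 = (QuotientGroup.mk ((FreeGroup.of true) ^ 3) : ModGroup) := rfl
  refine this.trans ?_
  exact (QuotientGroup.eq_one_iff _).mpr (Subgroup.subset_normalClosure (Set.mem_insert _ _))

lemma hs2 : ss ^ 2 = 1 := by
  have : ss ^ 2 = (QuotientGroup.mk ((FreeGroup.of false) ^ 2) : ModGroup) := rfl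
  refine this.trans ?_
  exact (QuotientGroup.eq_one_iff _).mpr (Subgroup.subset_normalClosure (Set.mem_insert_of_mem _ rfl))

abbrev Mat := Matrix (Fin 3) (Fin 3) ℚ

def tmat (x y : ℚ) : Mat := !![1,0,x; 0,1,y; 0,0,1]

lemma tmat_mul (x y x' y' : ℚ) : tmat x y * tmat x' y' = tmat (x+x') (y+y') := by
  simp [tmat, Matrix.mul_fin_three, add_comm]

lemma tmat_zero : tmat 0 0 = 1 := by
  rw [tmat, Matrix.one_fin_three]

def Rm : Mat := !![0,-1,-1/2; 1,-1,0; 0,0,1]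
def Sm : Mat := !![-1,0,0; 0,-1,0; 0,0,1]

lemma Sm2 : Sm * Sm = 1 := by rw [Sm, Matrix.one_fin_three, Matrix.mul_fin_three]; norm_num

lemma Rm3 : Rm * (Rm * Rm) = 1 := by
  rw [Rm, Matrix.one_fin_three, Matrix.mul_fin_three, Matrix.mul_fin_three]; norm_num

lemma Rm3' : (Rm * Rm) * Rm = 1 := by
  rw [Rm, Matrix.one_fin_three, Matrix.mul_fin_three, Matrix.mul_fin_three]; norm_num

def Ru : Matˣ := ⟨Rm, Rm * Rm, Rm3, Rm3'⟩
def Su : Matˣ := ⟨Sm, Sm, Sm2, Sm2⟩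

def fgen : Bool → Matˣ := fun b => if b then Ru else Su

lemma val_Ru : (Ru : Mat) = Rm := rfl
lemma val_Su : (Su : Mat) = Sm := rfl

lemma Ru3 : Ru ^ 3 = 1 := by
  apply Units.ext
  rw [Units.val_pow_eq_pow_val, Units.val_one, val_Ru, pow_succ, pow_two]
  exact Rm3'

lemma Su2 : Su ^ 2 = 1 := by
  apply Units.ext
  rw [Units.val_pow_eq_pow_val, Units.val_one, val_Su, pow_two]
  exact Sm2

lemma rels_check : ∀ r ∈ modRels, FreeGroup.lift fgen r = 1 := by
  intro r hr
  rcases hr with h | h <;> subst h <;>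
    simp only [map_pow, FreeGroup.lift_apply_of, fgen, if_true, if_false, Bool.cond_self] <;>
    norm_num
  · exact Ru3
  · exact Su2

noncomputable def φ : ModGroup →* Matˣ := PresentedGroup.toGroup rels_check

lemma φ_r : φ rr = Ru := PresentedGroup.toGroup.of rels_check
lemma φ_s : φ ss = Su := PresentedGroup.toGroup.of rels_check

def aa : ModGroup := ss * rr * ss * rr ^ 2
def bb : ModGroup := ss * rr ^ 2 * ss * rr

lemma φ_a : (φ aa : Mat) = tmat 1 0 := by
  have h : φ aa = Su * Ru * Su * Ru ^ 2 := by
    rw [aa]; simp only [_root_.map_mul, map_pow, φ_r, φ_s]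
  rw [h]
  simp only [Units.val_mul, Units.val_pow_eq_pow_val, val_Ru, val_Su, pow_two]
  rw [tmat, Sm, Rm]
  rw [Matrix.mul_fin_three, Matrix.mul_fin_three, Matrix.mul_fin_three, Matrix.mul_fin_three]
  norm_num

lemma φ_b : (φ bb : Mat) = tmat 1 1 := by
  have h : φ bb = Su * Ru ^ 2 * Su * Ru := by
    rw [bb]; simp only [_root_.map_mul, map_pow, φ_r, φ_s]
  rw [h]
  simp only [Units.val_mul, Units.val_pow_eq_pow_val, val_Ru, val_Su, pow_two]
  rw [tmat, Sm, Rm]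
  rw [Matrix.mul_fin_three, Matrix.mul_fin_three, Matrix.mul_fin_three, Matrix.mul_fin_three]
  norm_num



lemma hsi : ss⁻¹ = ss := by
  rw [← mul_one ss⁻¹, ← hs2, pow_two, ← mul_assoc, inv_mul_cancel, one_mul]

lemma l1 : ss * ss = 1 := by rw [← pow_two, hs2]
lemma l2 : rr * (rr * rr) = 1 := by rw [← pow_two, ← pow_succ', hr3]
lemma l2' : rr * rr * rr = 1 := by rw [← pow_two, ← pow_succ, hr3]

lemma hri : rr⁻¹ = rr * rr := inv_eq_of_mul_eq_one_right l2

lemma k1 : ∀ x : ModGroup, ss * (ss * x) = x := fun x => by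
  rw [← mul_assoc, l1, one_mul]

lemma k2 : ∀ x : ModGroup, rr * (rr * (rr * x)) = x := fun x => by
  rw [← mul_assoc, ← mul_assoc, l2', one_mul]

lemma key1 : (ss * rr) * aa * (ss * rr)⁻¹ = aa * bb⁻¹ := by
  rw [aa, bb]
  simp only [_root_.mul_inv_rev, hsi, hri, pow_two, mul_assoc, k1, k2, l1, l2, mul_one]

lemma key2 : (ss * rr) * bb * (ss * rr)⁻¹ = aa := by
  rw [aa, bb]
  simp only [_root_.mul_inv_rev, hsi, hri, pow_two, mul_assoc, k1, k2, l1, l2, mul_one]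


def TransSG : Subgroup Matˣ where
  carrier := {U | ∃ x y : ℚ, (U : Mat) = tmat x y}
  one_mem' := ⟨0, 0, by rw [Units.val_one, tmat_zero]⟩
  mul_mem' := by
    rintro U V ⟨x, y, hU⟩ ⟨x', y', hV⟩
    exact ⟨x + x', y + y', by rw [Units.val_mul, hU, hV, tmat_mul]⟩
  inv_mem' := by
    rintro U ⟨x, y, hU⟩
    refine ⟨-x, -y, ?_⟩
    calc (↑U⁻¹ : Mat) = ↑U⁻¹ * (↑U * tmat (-x) (-y)) := by
          rw [hU, tmat_mul]; simp [tmat_zero]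
      _ = (↑U⁻¹ * ↑U) * tmat (-x) (-y) := (mul_assoc _ _ _).symm
      _ = tmat (-x) (-y) := by rw [U.inv_mul, one_mul]

lemma memA : aa ∈ modF := Subgroup.subset_closure (Or.inl rfl)
lemma memB : bb ∈ modF := Subgroup.subset_closure (Or.inr rfl)

def A : modF := ⟨aa, memA⟩
def B : modF := ⟨bb, memB⟩

lemma φ_trans : ∀ g ∈ modF, φ g ∈ TransSG := by
  intro g hg
  have h : modF ≤ TransSG.comap φ := by
    rw [modF, Subgroup.closure_le]
    rintro x (rfl | rfl)
    · exact ⟨1, 0, φ_a⟩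
    · exact ⟨1, 1, φ_b⟩
  exact h hg

lemma tmat02 (x y : ℚ) : tmat x y 0 2 = x := rfl
lemma tmat12 (x y : ℚ) : tmat x y 1 2 = y := rfl

noncomputable def ψ : modF →* Multiplicative (ℚ × ℚ) where
  toFun f := Multiplicative.ofAdd ((φ f : Mat) 0 2, (φ f : Mat) 1 2)
  map_one' := by
    show Multiplicative.ofAdd ((φ ((1:modF) : ModGroup) : Mat) 0 2, (φ ((1:modF) : ModGroup) : Mat) 1 2) = 1
    have h : φ ((1 : modF) : ModGroup) = 1 := by
      rw [Subgroup.coe_one, _root_.map_one]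
    rw [h]
    have : ((1 : Matˣ) : Mat) = tmat 0 0 := by rw [Units.val_one, tmat_zero]
    rw [this, tmat02, tmat12]
    rfl
  map_mul' f g := by
    obtain ⟨x, y, hf⟩ := φ_trans f f.2
    obtain ⟨x', y', hg⟩ := φ_trans g g.2
    show Multiplicative.ofAdd ((φ ((f*g : modF) : ModGroup) : Mat) 0 2, (φ ((f*g : modF) : ModGroup) : Mat) 1 2)
      = Multiplicative.ofAdd ((φ (f : ModGroup) : Mat) 0 2, (φ (f : ModGroup) : Mat) 1 2)
      * Multiplicative.ofAdd ((φ (g : ModGroup) : Mat) 0 2, (φ (g : ModGroup) : Mat) 1 2)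
    have hfg : φ ((f * g : modF) : ModGroup) = φ (f : ModGroup) * φ (g : ModGroup) := by
      rw [Subgroup.coe_mul, _root_.map_mul]
    rw [hfg, ← ofAdd_add]
    simp only [Units.val_mul, hf, hg, tmat_mul, tmat02, tmat12]
    rfl


lemma ψA : ψ A = Multiplicative.ofAdd ((1:ℚ), (0:ℚ)) := by
  show Multiplicative.ofAdd ((φ aa : Mat) 0 2, (φ aa : Mat) 1 2) = _
  rw [φ_a, tmat02, tmat12]

lemma ψB : ψ B = Multiplicative.ofAdd ((1:ℚ), (1:ℚ)) := by
  show Multiplicative.ofAdd ((φ bb : Mat) 0 2, (φ bb : Mat) 1 2) = _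
  rw [φ_b, tmat02, tmat12]

noncomputable def Ψ : Abelianization modF →* Multiplicative (ℚ × ℚ) :=
  Abelianization.lift ψ

noncomputable abbrev oA : Abelianization modF := Abelianization.of A
noncomputable abbrev oB : Abelianization modF := Abelianization.of B

lemma ΨoA : Ψ oA = Multiplicative.ofAdd ((1:ℚ), (0:ℚ)) := by
  rw [Ψ, Abelianization.lift_apply_of, ψA]
lemma ΨoB : Ψ oB = Multiplicative.ofAdd ((1:ℚ), (1:ℚ)) := by
  rw [Ψ, Abelianization.lift_apply_of, ψB]

lemma Ψ_mix {g h : Abelianization modF} {p q u v : ℚ}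
    (hg : Ψ g = Multiplicative.ofAdd (p, q)) (hh : Ψ h = Multiplicative.ofAdd (u, v))
    (m n : ℤ) : Ψ (g ^ m * h ^ n) = Multiplicative.ofAdd (m*p + n*u, m*q + n*v) := by
  rw [_root_.map_mul, map_zpow, map_zpow, hg, hh, ← ofAdd_zsmul, ← ofAdd_zsmul, ← ofAdd_add]
  congr 1

lemma gen (x : Abelianization modF) :
    ∃ m n : ℤ, x = oA ^ m * oB ^ n := by
  induction x using QuotientGroup.induction_on with
  | _ f =>
    obtain ⟨g, hg⟩ := f
    refine Subgroup.closure_induction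
      (p := fun g hg => ∃ m n : ℤ, (Abelianization.of (⟨g, hg⟩ : modF) : Abelianization modF)
        = oA ^ m * oB ^ n) ?_ ?_ ?_ ?_ hg
    · rintro x (rfl | rfl)
      · exact ⟨1, 0, by rw [zpow_one, zpow_zero, mul_one]; rfl⟩
      · exact ⟨0, 1, by rw [zpow_one, zpow_zero, one_mul]; rfl⟩
    · exact ⟨0, 0, by rw [zpow_zero, zpow_zero, mul_one]; exact _root_.map_one _⟩
    · rintro x y hx hy ⟨m1, n1, e1⟩ ⟨m2, n2, e2⟩
      refine ⟨m1 + m2, n1 + n2, ?_⟩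
      show Abelianization.of ((⟨x, hx⟩ : modF) * ⟨y, hy⟩) = _
      rw [_root_.map_mul, e1, e2, _root_.zpow_add, _root_.zpow_add, mul_mul_mul_comm]
    · rintro x hx ⟨m, n, e⟩
      refine ⟨-m, -n, ?_⟩
      show Abelianization.of ((⟨x, hx⟩ : modF)⁻¹) = _
      rw [map_inv, e, mul_inv, ← _root_.zpow_neg, ← _root_.zpow_neg]

section withN
variable (hN : modF.Normal)

lemma c1 : conjAb hN oA = oA * oB⁻¹ := by
  haveI := hN
  unfold conjAb
  rw [Abelianization.map_of]
  have h : (@MulAut.conjNormal ModGroup _ modF hN (ss * rr)) A = A * B⁻¹ := by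
    apply Subtype.ext
    rw [MulAut.conjNormal_apply, Subgroup.coe_mul, Subgroup.coe_inv]
    exact key1
  show Abelianization.of ((@MulAut.conjNormal ModGroup _ modF hN (ss * rr)) A) = _
  rw [h, _root_.map_mul, map_inv]

lemma c2 : conjAb hN oB = oA := by
  haveI := hN
  unfold conjAb
  rw [Abelianization.map_of]
  have h : (@MulAut.conjNormal ModGroup _ modF hN (ss * rr)) B = A := by
    apply Subtype.ext
    rw [MulAut.conjNormal_apply]
    exact key2
  show Abelianization.of ((@MulAut.conjNormal ModGroup _ modF hN (ss * rr)) B) = _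
  rw [h]

lemma c3 : conjAb hN (oA * oB⁻¹) = oB⁻¹ := by
  rw [_root_.map_mul, map_inv, c1, c2, mul_right_comm, mul_inv_cancel, one_mul]

lemma c4 : conjAb hN (oB⁻¹) = oA⁻¹ := by rw [map_inv, c2]

lemma conjAb_bij : Function.Bijective (conjAb hN) := by
  haveI := hN
  refine Function.bijective_iff_has_inverse.mpr
    ⟨Abelianization.map ((@MulAut.conjNormal ModGroup _ modF hN (ss * rr))⁻¹).toMonoidHom,
      fun x => ?_, fun x => ?_⟩
  · induction x using QuotientGroup.induction_on with
    | _ f =>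
      unfold conjAb
      show (Abelianization.map ((@MulAut.conjNormal ModGroup _ modF hN (ss * rr))⁻¹).toMonoidHom)
          ((Abelianization.map (@MulAut.conjNormal ModGroup _ modF hN (ss * rr)).toMonoidHom)
            (Abelianization.of f)) = Abelianization.of f
      rw [Abelianization.map_of, Abelianization.map_of]
      exact congrArg Abelianization.of
        (MulAut.inv_apply_self _ (@MulAut.conjNormal ModGroup _ modF hN (ss * rr)) f)
  · induction x using QuotientGroup.induction_on with
    | _ f =>
      unfold conjAb
      show (Abelianization.map (@MulAut.conjNormal ModGroup _ modF hN (ss * rr)).toMonoidHom)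
          ((Abelianization.map ((@MulAut.conjNormal ModGroup _ modF hN (ss * rr))⁻¹).toMonoidHom)
            (Abelianization.of f)) = Abelianization.of f
      rw [Abelianization.map_of, Abelianization.map_of]
      exact congrArg Abelianization.of
        (MulAut.apply_inv_self _ (@MulAut.conjNormal ModGroup _ modF hN (ss * rr)) f)

lemma vAB : Ψ (oA * oB⁻¹) = Multiplicative.ofAdd ((0:ℚ), (-1:ℚ)) := by
  rw [_root_.map_mul, map_inv, ΨoA, ΨoB, ← ofAdd_neg, ← ofAdd_add]
  congr 1
  rw [Prod.ext_iff]
  constructor <;> norm_num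

lemma vBi : Ψ (oB⁻¹) = Multiplicative.ofAdd ((-1:ℚ), (-1:ℚ)) := by
  rw [map_inv, ΨoB, ← ofAdd_neg]
  congr 1

lemma comps {y z : Abelianization modF} {p q u v : ℚ}
    (hy : Ψ y = Multiplicative.ofAdd (p, q)) (hz : Ψ z = Multiplicative.ofAdd (u, v))
    {m n : ℤ} (h : y ^ m = z ^ n) :
    (m:ℚ) * p = (n:ℚ) * u ∧ (m:ℚ) * q = (n:ℚ) * v := by
  have h' := congrArg Ψ h
  rw [map_zpow, map_zpow, hy, hz, ← ofAdd_zsmul, ← ofAdd_zsmul] at h'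
  have h2 := Multiplicative.ofAdd.injective h'
  rw [Prod.ext_iff] at h2
  obtain ⟨ha, hb⟩ := h2
  constructor
  · simpa [zsmul_eq_mul] using ha
  · simpa [zsmul_eq_mul] using hb

lemma pos1 {m n : ℤ} (hm : m ≠ 0) (hn : n ≠ 0) : ((m:ℚ)^2 - m*n + n^2) ≠ 0 := by
  have hm' : ((m:ℚ)) ≠ 0 := Int.cast_ne_zero.mpr hm
  have h2 : (0:ℚ) < (m:ℚ)^2 := by positivity
  nlinarith [sq_nonneg ((m:ℚ) - n), sq_nonneg ((n:ℚ))]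

lemma pos2 {m n : ℤ} (hm : m ≠ 0) (hn : n ≠ 0) : ((m:ℚ)^2 + m*n + n^2) ≠ 0 := by
  have hm' : ((m:ℚ)) ≠ 0 := Int.cast_ne_zero.mpr hm
  have h2 : (0:ℚ) < (m:ℚ)^2 := by positivity
  nlinarith [sq_nonneg ((m:ℚ) + n), sq_nonneg ((n:ℚ))]

lemma solve1 {m n m0 n0 : ℤ} (hm : m ≠ 0) (hn : n ≠ 0)
    (h1 : (m:ℚ) * ((m0:ℚ)*0 + (n0:ℚ)*1) = (n:ℚ) * ((m0:ℚ)*1 + (n0:ℚ)*1))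
    (h2 : (m:ℚ) * ((m0:ℚ)*(-1) + (n0:ℚ)*0) = (n:ℚ) * ((m0:ℚ)*0 + (n0:ℚ)*1)) :
    m0 = 0 ∧ n0 = 0 := by
  have key : ((m:ℚ)^2 - m*n + n^2) * (n0:ℚ) = 0 := by
    linear_combination (m:ℚ) * h1 + (-(n:ℚ)) * h2
  have hn0 : (n0:ℚ) = 0 := by
    rcases mul_eq_zero.mp key with h | h
    · exact absurd h (pos1 hm hn)
    · exact h
  have hm0 : (m0:ℚ) = 0 := by
    have hm' : ((m:ℚ)) ≠ 0 := Int.cast_ne_zero.mpr hm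
    have key2 : (m:ℚ) * (m0:ℚ) = 0 := by
      linear_combination (-1:ℚ) * h2 + (-(n:ℚ)) * hn0
    rcases mul_eq_zero.mp key2 with h | h
    · exact absurd h hm'
    · exact h
  exact ⟨by exact_mod_cast hm0, by exact_mod_cast hn0⟩

lemma solve2 {m n m0 n0 : ℤ} (hm : m ≠ 0) (hn : n ≠ 0)
    (h1 : (m:ℚ) * ((m0:ℚ)*(-1) + (n0:ℚ)*0) = (n:ℚ) * ((m0:ℚ)*1 + (n0:ℚ)*1))
    (h2 : (m:ℚ) * ((m0:ℚ)*(-1) + (n0:ℚ)*(-1)) = (n:ℚ) * ((m0:ℚ)*0 + (n0:ℚ)*1)) :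
    m0 = 0 ∧ n0 = 0 := by
  have key : ((m:ℚ)^2 + m*n + n^2) * (m0:ℚ) = 0 := by
    linear_combination (-(m:ℚ)-(n:ℚ)) * h1 + (n:ℚ) * h2
  have hm0 : (m0:ℚ) = 0 := by
    rcases mul_eq_zero.mp key with h | h
    · exact absurd h (pos2 hm hn)
    · exact h
  have hn0 : (n0:ℚ) = 0 := by
    have hn' : ((n:ℚ)) ≠ 0 := Int.cast_ne_zero.mpr hn
    have key2 : (n:ℚ) * (n0:ℚ) = 0 := by
      linear_combination (-1:ℚ) * h1 + (-(m:ℚ)-(n:ℚ)) * hm0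
    rcases mul_eq_zero.mp key2 with h | h
    · exact absurd h hn'
    · exact h
  exact ⟨by exact_mod_cast hm0, by exact_mod_cast hn0⟩

lemma step1 (m0 n0 : ℤ) :
    conjAb hN (oA ^ m0 * oB ^ n0) = (oA * oB⁻¹) ^ m0 * oA ^ n0 := by
  rw [_root_.map_mul, map_zpow, map_zpow, c1, c2]

lemma step2 (m0 n0 : ℤ) :
    conjAb hN ((oA * oB⁻¹) ^ m0 * oA ^ n0) = (oB⁻¹) ^ m0 * (oA * oB⁻¹) ^ n0 := by
  rw [_root_.map_mul, map_zpow, map_zpow, c3, c1]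

lemma step3 (m0 n0 : ℤ) :
    conjAb hN ((oB⁻¹) ^ m0 * (oA * oB⁻¹) ^ n0) = (oA ^ m0 * oB ^ n0)⁻¹ := by
  rw [_root_.map_mul, map_zpow, map_zpow, c4, c3, _root_.mul_inv, _root_.inv_zpow,
    _root_.inv_zpow]

lemma x_ne (m0 n0 : ℤ) (hx : oA ^ m0 * oB ^ n0 ≠ 1) : ¬ (m0 = 0 ∧ n0 = 0) := by
  rintro ⟨rfl, rfl⟩
  exact hx (by rw [zpow_zero, zpow_zero, mul_one])

lemma notSL1 (x : Abelianization modF) (hx : x ≠ 1) : ¬ SameLine (conjAb hN x) x := by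
  obtain ⟨m0, n0, rfl⟩ := gen x
  rintro ⟨m, n, hm, hn, h⟩
  rw [step1] at h
  obtain ⟨h1, h2⟩ := comps (Ψ_mix vAB ΨoA m0 n0) (Ψ_mix ΨoA ΨoB m0 n0) h
  obtain ⟨hm0, hn0⟩ := solve1 hm hn h1 h2
  exact x_ne m0 n0 hx ⟨hm0, hn0⟩

lemma notSL2 (x : Abelianization modF) (hx : x ≠ 1) :
    ¬ SameLine (conjAb hN (conjAb hN x)) x := by
  obtain ⟨m0, n0, rfl⟩ := gen x
  rintro ⟨m, n, hm, hn, h⟩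
  rw [step1, step2] at h
  obtain ⟨h1, h2⟩ := comps (Ψ_mix vBi vAB m0 n0) (Ψ_mix ΨoA ΨoB m0 n0) h
  obtain ⟨hm0, hn0⟩ := solve2 hm hn h1 h2
  exact x_ne m0 n0 hx ⟨hm0, hn0⟩

end withN

noncomputable def Φ : Multiplicative (ℤ × ℤ) →* Abelianization modF where
  toFun p := oA ^ (p.toAdd.1) * oB ^ (p.toAdd.2)
  map_one' := by
    show oA ^ (0:ℤ) * oB ^ (0:ℤ) = 1
    rw [zpow_zero, zpow_zero, mul_one]
  map_mul' p q := by
    show oA ^ (p.toAdd.1 + q.toAdd.1) * oB ^ (p.toAdd.2 + q.toAdd.2) = _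
    rw [_root_.zpow_add, _root_.zpow_add, mul_mul_mul_comm]

lemma Φ_bij : Function.Bijective Φ := by
  constructor
  · intro p q h
    have h' := congrArg Ψ h
    have hp : Ψ (Φ p) = Multiplicative.ofAdd
        ((p.toAdd.1 : ℚ)*1 + (p.toAdd.2 : ℚ)*1, (p.toAdd.1 : ℚ)*0 + (p.toAdd.2 : ℚ)*1) :=
      Ψ_mix ΨoA ΨoB _ _
    have hq : Ψ (Φ q) = Multiplicative.ofAdd
        ((q.toAdd.1 : ℚ)*1 + (q.toAdd.2 : ℚ)*1, (q.toAdd.1 : ℚ)*0 + (q.toAdd.2 : ℚ)*1) :=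
      Ψ_mix ΨoA ΨoB _ _
    rw [hp, hq] at h'
    have h2 := Multiplicative.ofAdd.injective h'
    rw [Prod.ext_iff] at h2
    obtain ⟨ha, hb⟩ := h2
    simp only [mul_one, mul_zero, zero_add] at ha hb
    have hb' : p.toAdd.2 = q.toAdd.2 := by exact_mod_cast hb
    have ha' : p.toAdd.1 = q.toAdd.1 := by
      have : (p.toAdd.1 : ℚ) = q.toAdd.1 := by linarith
      exact_mod_cast this
    have : p.toAdd = q.toAdd := Prod.ext ha' hb'
    exact Multiplicative.toAdd.injective this
  · intro x
    obtain ⟨m, n, e⟩ := gen x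
    exact ⟨Multiplicative.ofAdd (m, n), e.symm⟩

end CP


open CP in
/-- Conjugation by `s r` induces an automorphism of the abelianization `F^ab ≅ ℤ²` of
the normal free subgroup `F = ⟨ s r s r², s r² s r ⟩ ≤ ⟨r, s ∣ r³ = s² = 1⟩`, and the
induced action on the set of lines through the origin of `ℚ²` has all orbits of size
exactly 3 (for lines coming from nontrivial elements). -/
theorem conj_action_on_lines_has_orbits_of_size_three (hN : modF.Normal) :
    Function.Bijective (conjAb hN) ∧
      Nonempty (Abelianization modF ≃* Multiplicative (ℤ × ℤ)) ∧
      ∀ x : Abelianization modF, x ≠ 1 →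
        SameLine (conjAb hN (conjAb hN (conjAb hN x))) x ∧
        ¬ SameLine (conjAb hN x) x ∧
        ¬ SameLine (conjAb hN (conjAb hN x)) x ∧
        ¬ SameLine (conjAb hN (conjAb hN x)) (conjAb hN x) := by
  refine ⟨conjAb_bij hN, ⟨(MulEquiv.ofBijective Φ Φ_bij).symm⟩, fun x hx => ?_⟩
  have hinv : conjAb hN (conjAb hN (conjAb hN x)) = x⁻¹ := by
    obtain ⟨m0, n0, rfl⟩ := gen x
    rw [step1, step2, step3]
  refine ⟨⟨-1, 1, by norm_num, one_ne_zero, by rw [hinv, zpow_neg, zpow_one, inv_inv, zpow_one]⟩,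
    notSL1 hN x hx, notSL2 hN x hx, ?_⟩
  have hx' : conjAb hN x ≠ 1 := by
    intro h
    exact hx ((conjAb_bij hN).1 (h.trans (_root_.map_one (conjAb hN)).symm))
  exact notSL1 hN (conjAb hN x) hx'
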